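/- Let Γ ∈ M_n(ℂ) be the n×n lower-triangular Jordan block with eigenvalue γ ∈ ℂ, where Re(γ) ≠ 0. Let η₁, η₂ ∈ ℂⁿ and suppose that the first component of η₁ or the first component of η₂ is different from zero. If Ω ∈ M_n(ℂ) satisfies Γ·Ω + Ω·Γᴴ = η₁·η₁ᴴ + η₂·η₂ᴴ, then Ω is invertible. -/
import Mathlib


open Matrix

/-- The n×n lower-triangular Jordan block with eigenvalue γ. -/
def jordanBlock (n : ℕ) (γ : ℂ) : Matrix (Fin n) (Fin n) ℂ :=
  Matrix.of fun i j => if (i : ℕ) = (j : ℕ) then γ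
    else if (i : ℕ) = (j : ℕ) + 1 then 1 else 0

/-- A vector of ℂⁿ viewed as an n×1 column matrix. -/
def colV {n : ℕ} (η : Fin n → ℂ) : Matrix (Fin n) (Fin 1) ℂ :=
  Matrix.of fun i _ => η i

variable {n : ℕ} {γ : ℂ}


lemma shift_sum (f : Fin n → ℂ) (m : ℕ) :
    (∑ k : Fin n, if m = (k : ℕ) + 1 then f k else 0)
      = if h : 0 < m ∧ m - 1 < n then f ⟨m - 1, h.2⟩ else 0 := by
  split_ifs with h
  · rw [Finset.sum_eq_single ⟨m - 1, h.2⟩]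
    · simp [Nat.sub_add_cancel h.1]
    · intro k _ hk
      rw [if_neg]
      intro he
      exact hk (by ext; simp [he])
    · simp
  · apply Finset.sum_eq_zero
    intro k _
    rw [if_neg]
    intro he
    exact h ⟨by omega, by omega⟩

lemma shift_sum' (f : Fin n → ℂ) (m : ℕ) :
    (∑ k : Fin n, if (k : ℕ) = m + 1 then f k else 0)
      = if h : m + 1 < n then f ⟨m + 1, h⟩ else 0 := by
  split_ifs with h
  · rw [Finset.sum_eq_single ⟨m + 1, h⟩]
    · simp
    · intro k _ hk
      exact if_neg (fun he => hk (by ext; exact he))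
    · simp
  · apply Finset.sum_eq_zero
    intro k _
    rw [if_neg]
    intro he
    exact h (he ▸ k.2)

lemma jb_mul_apply (X : Matrix (Fin n) (Fin n) ℂ) (i j : Fin n) :
    (jordanBlock n γ * X) i j
      = γ * X i j + if h : 0 < (i:ℕ) ∧ (i:ℕ) - 1 < n then X ⟨(i:ℕ)-1, h.2⟩ j else 0 := by
  rw [Matrix.mul_apply]
  have key : ∀ k : Fin n, jordanBlock n γ i k * X k j
      = (if i = k then γ * X k j else 0) + (if (i:ℕ) = (k:ℕ)+1 then X k j else 0) := by
    intro k
    simp only [jordanBlock, Matrix.of_apply]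
    by_cases h1 : (i:ℕ) = (k:ℕ)
    · rw [if_pos h1, if_pos (Fin.ext h1), if_neg (show ¬(i:ℕ) = (k:ℕ)+1 by omega)]; ring
    · rw [if_neg h1, if_neg (show ¬ i = k from fun he => h1 (congrArg Fin.val he))]
      by_cases h2 : (i:ℕ) = (k:ℕ)+1
      · rw [if_pos h2, if_pos h2]; ring
      · rw [if_neg h2, if_neg h2]; ring
  simp_rw [key]
  rw [Finset.sum_add_distrib, Finset.sum_ite_eq, shift_sum]
  simp

lemma mul_jbH_apply (X : Matrix (Fin n) (Fin n) ℂ) (i j : Fin n) :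
    (X * (jordanBlock n γ)ᴴ) i j
      = (starRingEnd ℂ) γ * X i j
        + if h : 0 < (j:ℕ) ∧ (j:ℕ) - 1 < n then X i ⟨(j:ℕ)-1, h.2⟩ else 0 := by
  rw [Matrix.mul_apply]
  have key : ∀ k : Fin n, X i k * (jordanBlock n γ)ᴴ k j
      = (if j = k then (starRingEnd ℂ) γ * X i k else 0)
        + (if (j:ℕ) = (k:ℕ)+1 then X i k else 0) := by
    intro k
    simp only [jordanBlock, Matrix.conjTranspose_apply, Matrix.of_apply]
    by_cases h1 : (j:ℕ) = (k:ℕ)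
    · rw [if_pos h1, if_pos (Fin.ext h1), if_neg (show ¬(j:ℕ) = (k:ℕ)+1 by omega)]
      simp only [Complex.star_def]; ring
    · rw [if_neg h1, if_neg (show ¬ j = k from fun he => h1 (congrArg Fin.val he))]
      by_cases h2 : (j:ℕ) = (k:ℕ)+1
      · rw [if_pos h2, if_pos h2]; simp
      · rw [if_neg h2, if_neg h2]; simp
  simp_rw [key]
  rw [Finset.sum_add_distrib, Finset.sum_ite_eq, shift_sum]
  simp

lemma jbH_mulVec (x : Fin n → ℂ) (i : Fin n) :
    ((jordanBlock n γ)ᴴ *ᵥ x) i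
      = (starRingEnd ℂ) γ * x i + if h : (i:ℕ)+1 < n then x ⟨(i:ℕ)+1, h⟩ else 0 := by
  rw [Matrix.mulVec, dotProduct]
  have key : ∀ k : Fin n, (jordanBlock n γ)ᴴ i k * x k
      = (if i = k then (starRingEnd ℂ) γ * x k else 0)
        + (if (k:ℕ) = (i:ℕ)+1 then x k else 0) := by
    intro k
    simp only [jordanBlock, Matrix.conjTranspose_apply, Matrix.of_apply]
    by_cases h1 : (k:ℕ) = (i:ℕ)
    · rw [if_pos h1, if_pos (Fin.ext h1.symm), if_neg (show ¬(k:ℕ) = (i:ℕ)+1 by omega)]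
      simp only [Complex.star_def]; ring
    · rw [if_neg h1,
        if_neg (show ¬ i = k from fun he => h1 (congrArg Fin.val he.symm))]
      by_cases h2 : (k:ℕ) = (i:ℕ)+1
      · rw [if_pos h2, if_pos h2]; simp
      · rw [if_neg h2, if_neg h2]; simp
  simp_rw [key]
  rw [Finset.sum_add_distrib, Finset.sum_ite_eq, shift_sum']
  simp

lemma sylvester (hγ : γ.re ≠ 0) (X : Matrix (Fin n) (Fin n) ℂ)
    (hX : jordanBlock n γ * X + X * (jordanBlock n γ)ᴴ = 0) : X = 0 := by
  have hsum : γ + (starRingEnd ℂ) γ ≠ 0 := by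
    rw [Complex.add_conj]
    simpa using hγ
  suffices H : ∀ s : ℕ, ∀ i j : Fin n, (i:ℕ)+(j:ℕ) = s → X i j = 0 by
    ext i j
    simpa using H ((i:ℕ)+(j:ℕ)) i j rfl
  intro s
  induction s using Nat.strong_induction_on with
  | _ s ih =>
    intro i j hs
    have he := congrFun (congrFun hX i) j
    rw [Matrix.add_apply, jb_mul_apply, mul_jbH_apply, Matrix.zero_apply] at he
    have t1 : (if h : 0 < (i:ℕ) ∧ (i:ℕ)-1 < n then X ⟨(i:ℕ)-1,h.2⟩ j else 0) = 0 := by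
      split_ifs with h
      · exact ih ((i:ℕ)-1+(j:ℕ)) (by omega) _ _ rfl
      · rfl
    have t2 : (if h : 0 < (j:ℕ) ∧ (j:ℕ)-1 < n then X i ⟨(j:ℕ)-1,h.2⟩ else 0) = 0 := by
      split_ifs with h
      · exact ih ((i:ℕ)+((j:ℕ)-1)) (by omega) _ _ rfl
      · rfl
    rw [t1, t2] at he
    have hfac : (γ + (starRingEnd ℂ) γ) * X i j = 0 := by linear_combination he
    rcases mul_eq_zero.1 hfac with h | h
    · exact absurd h hsum
    · exact h

lemma colV_mulVec (η v : Fin n → ℂ) :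
    (colV η * (colV η)ᴴ) *ᵥ v = fun i => η i * (star η ⬝ᵥ v) := by
  funext i
  rw [Matrix.mulVec, dotProduct, dotProduct, Finset.mul_sum]
  apply Finset.sum_congr rfl
  intro j _
  rw [Matrix.mul_apply, Fin.sum_univ_one]
  simp only [colV, Matrix.conjTranspose_apply, Matrix.of_apply, Pi.star_apply]
  ring

lemma rank1_quad (η v : Fin n → ℂ) :
    star v ⬝ᵥ ((colV η * (colV η)ᴴ) *ᵥ v)
      = star (star η ⬝ᵥ v) * (star η ⬝ᵥ v) := by
  rw [colV_mulVec, dotProduct]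
  have hstar : star (star η ⬝ᵥ v) = ∑ j, η j * star (v j) := by
    rw [dotProduct, star_sum]
    apply Finset.sum_congr rfl
    intro j _
    simp [mul_comm]
  rw [hstar, Finset.sum_mul]
  apply Finset.sum_congr rfl
  intro j _
  simp only [Pi.star_apply]
  ring

lemma quad_zero (a b : ℂ) (hab : star a * a + star b * b = 0) : a = 0 ∧ b = 0 := by
  have h1 : (Complex.normSq a : ℂ) + (Complex.normSq b : ℂ) = 0 := by
    rw [← Complex.mul_conj a, ← Complex.mul_conj b]
    simp only [Complex.star_def] at hab
    linear_combination hab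
  have h2 : Complex.normSq a + Complex.normSq b = 0 := by
    exact_mod_cast h1
  have ha := Complex.normSq_nonneg a
  have hb := Complex.normSq_nonneg b
  constructor
  · exact Complex.normSq_eq_zero.1 (by linarith)
  · exact Complex.normSq_eq_zero.1 (by linarith)

theorem stmt_7 {n : ℕ} (hn : 0 < n) (γ : ℂ) (hγ : γ.re ≠ 0)
    (η₁ η₂ : Fin n → ℂ) (h0 : η₁ ⟨0, hn⟩ ≠ 0 ∨ η₂ ⟨0, hn⟩ ≠ 0)
    (Ω : Matrix (Fin n) (Fin n) ℂ)
    (hLyap : jordanBlock n γ * Ω + Ω * (jordanBlock n γ)ᴴ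
        = colV η₁ * (colV η₁)ᴴ + colV η₂ * (colV η₂)ᴴ) :
    IsUnit Ω := by
  set Γ := jordanBlock n γ with hΓdef
  -- Ω is Hermitian
  have hherm : Ωᴴ = Ω := by
    have hH := congrArg Matrix.conjTranspose hLyap
    simp only [Matrix.conjTranspose_add, Matrix.conjTranspose_mul,
      Matrix.conjTranspose_conjTranspose] at hH
    -- hH : Ωᴴ * Γᴴ + Γ * Ωᴴ = colV η₁ * (colV η₁)ᴴ + colV η₂ * (colV η₂)ᴴ
    have hdiff : Γ * (Ω - Ωᴴ) + (Ω - Ωᴴ) * Γᴴ = 0 := by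
      rw [Matrix.mul_sub, Matrix.sub_mul]
      rw [show Γ * Ω - Γ * Ωᴴ + (Ω * Γᴴ - Ωᴴ * Γᴴ)
          = (Γ * Ω + Ω * Γᴴ) - (Ωᴴ * Γᴴ + Γ * Ωᴴ) by abel]
      rw [hLyap, hH, sub_self]
    exact (sub_eq_zero.1 (sylvester hγ (Ω - Ωᴴ) hdiff)).symm
  -- kernel facts
  have hker : ∀ v : Fin n → ℂ, Ω *ᵥ v = 0 →
      (star η₁ ⬝ᵥ v = 0 ∧ star η₂ ⬝ᵥ v = 0 ∧ Ω *ᵥ (Γᴴ *ᵥ v) = 0) := by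
    intro v hv
    have hq0 : star v ⬝ᵥ (((colV η₁ * (colV η₁)ᴴ) + (colV η₂ * (colV η₂)ᴴ)) *ᵥ v) = 0 := by
      rw [← hLyap, Matrix.add_mulVec, dotProduct_add,
        ← Matrix.mulVec_mulVec, ← Matrix.mulVec_mulVec, hv, Matrix.mulVec_zero,
        dotProduct_zero, zero_add, Matrix.dotProduct_mulVec]
      have hzero : star v ᵥ* Ω = 0 := by
        rw [← hherm, ← Matrix.star_mulVec, hv]
        simp
      rw [hzero, zero_dotProduct]
    rw [Matrix.add_mulVec, dotProduct_add, rank1_quad, rank1_quad] at hq0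
    obtain ⟨h1, h2⟩ := quad_zero _ _ hq0
    refine ⟨h1, h2, ?_⟩
    have h3 := congrArg (fun M => M *ᵥ v) hLyap
    simp only [Matrix.add_mulVec] at h3
    rw [← Matrix.mulVec_mulVec, ← Matrix.mulVec_mulVec, hv, Matrix.mulVec_zero,
      zero_add, colV_mulVec, colV_mulVec, h1, h2] at h3
    rw [h3]
    funext i
    simp
  -- injectivity of mulVec
  rw [← Matrix.mulVec_injective_iff_isUnit]
  suffices hker0 : ∀ x : Fin n → ℂ, Ω *ᵥ x = 0 → x = 0 by
    intro a b hab
    have hd : Ω *ᵥ (a - b) = 0 := by rw [Matrix.mulVec_sub, hab, sub_self]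
    exact sub_eq_zero.1 (hker0 _ hd)
  intro x hx
  by_contra hxne
  -- the shift operator
  set Nsh : (Fin n → ℂ) → (Fin n → ℂ) :=
    fun v i => if h : (i:ℕ)+1 < n then v ⟨(i:ℕ)+1, h⟩ else 0 with hNsh
  have hNker : ∀ v : Fin n → ℂ, Ω *ᵥ v = 0 → Ω *ᵥ (Nsh v) = 0 := by
    intro v hv
    have hrepr : Nsh v = Γᴴ *ᵥ v - (starRingEnd ℂ) γ • v := by
      funext i
      rw [hNsh]
      simp only [Pi.sub_apply, Pi.smul_apply, smul_eq_mul]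
      rw [jbH_mulVec]
      ring
    rw [hrepr, Matrix.mulVec_sub, Matrix.mulVec_smul, (hker v hv).2.2, hv]
    simp
  have hiterker : ∀ k : ℕ, Ω *ᵥ (Nsh^[k] x) = 0 := by
    intro k
    induction k with
    | zero => simpa using hx
    | succ k ih =>
      rw [Function.iterate_succ_apply']
      exact hNker _ ih
  have hiter : ∀ (k : ℕ) (v : Fin n → ℂ) (i : Fin n),
      (Nsh^[k] v) i = if h : (i:ℕ)+k < n then v ⟨(i:ℕ)+k, h⟩ else 0 := by
    intro k
    induction k with
    | zero =>
      intro v i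
      rw [Function.iterate_zero_apply, dif_pos (by simpa using i.2)]
      all_goals (congr 1 <;> exact Fin.ext (by omega))
    | succ k ih =>
      intro v i
      rw [Function.iterate_succ_apply, ih (Nsh v) i]
      by_cases h : (i:ℕ)+k < n
      · rw [dif_pos h, hNsh]
        simp only
        by_cases h2 : (i:ℕ)+k+1 < n
        · rw [dif_pos h2, dif_pos (show (i:ℕ)+(k+1) < n by omega)]
          all_goals (congr 1 <;> exact Fin.ext (by omega))
        · rw [dif_neg h2, dif_neg (show ¬((i:ℕ)+(k+1) < n) by omega)]
      · rw [dif_neg h, dif_neg (show ¬((i:ℕ)+(k+1) < n) by omega)]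
  -- the largest nonzero coordinate
  have hex : ∃ i, x i ≠ 0 := by
    by_contra hc
    push_neg at hc
    exact hxne (funext hc)
  set F : Finset (Fin n) := Finset.univ.filter (fun i => x i ≠ 0) with hF
  have hFne : F.Nonempty := by
    obtain ⟨i, hi⟩ := hex
    exact ⟨i, by simp [hF, hi]⟩
  set m : Fin n := F.max' hFne with hm
  have hxm : x m ≠ 0 := by
    have := F.max'_mem hFne
    simp [hF] at this
    exact this
  have habove : ∀ (j : ℕ) (hj : j < n), (m:ℕ) < j → x ⟨j, hj⟩ = 0 := by
    intro j hj hij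
    by_contra hxi
    have hiF : (⟨j, hj⟩ : Fin n) ∈ F := by simp [hF, hxi]
    have hle := F.le_max' _ hiF
    rw [Fin.le_def] at hle
    simp only [Fin.val_mk] at hle
    omega
  -- the vector y = Nsh^[m] x
  set y : Fin n → ℂ := Nsh^[(m:ℕ)] x with hy
  have hy0 : y ⟨0, hn⟩ = x m := by
    rw [hy, hiter]
    rw [dif_pos (by simpa using m.2)]
    congr 1
    exact Fin.ext (by simp)
  have hyi : ∀ i : Fin n, (i:ℕ) ≠ 0 → y i = 0 := by
    intro i hi
    rw [hy, hiter]
    split_ifs with h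
    · exact habove _ h (by omega)
    · rfl
  have hyker : Ω *ᵥ y = 0 := hiterker _
  obtain ⟨hs1, hs2, -⟩ := hker y hyker
  have hdot : ∀ η : Fin n → ℂ, star η ⬝ᵥ y = star (η ⟨0, hn⟩) * x m := by
    intro η
    rw [dotProduct, Finset.sum_eq_single ⟨0, hn⟩]
    · rw [hy0]; rfl
    · intro k _ hk
      rw [hyi k (fun hc => hk (Fin.ext hc)), mul_zero]
    · simp
  rw [hdot] at hs1 hs2
  rcases h0 with h0 | h0
  · exact h0 (by simpa [star_eq_zero, hxm] using mul_eq_zero.1 hs1)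
  · exact h0 (by simpa [star_eq_zero, hxm] using mul_eq_zero.1 hs2)
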